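/- Let f be the n×n block diagonal matrix diag(σ, τ) where σ ∈ S_k is a k×k permutation matrix and τ is an (n-k)×(n-k) nilpotent matrix. Then the stabilizer of f under the conjugation action of S_n (acting by permutation matrices) is the direct product Z(σ) × Stab_{S_{n-k}}(τ), where Z(σ) is the centralizer of σ in S_k and Stab_{S_{n-k}}(τ) is the subgroup of permutation matrices in S_{n-k} commuting with τ. -/

import Mathlib

/-- The 0–1 matrix (over `ℚ`) of a permutation `σ`. -/
def permMatrixQ {β : Type*} [DecidableEq β] (σ : Equiv.Perm β) : Matrix β β ℚ :=
  fun i j => if σ i = j then 1 else 0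

lemma permMatrixQ_mul {β : Type*} [DecidableEq β] [Fintype β] (σ τ : Equiv.Perm β) :
    permMatrixQ σ * permMatrixQ τ = permMatrixQ (τ * σ) := by
  ext i j
  simp only [Matrix.mul_apply, permMatrixQ]
  rw [Finset.sum_eq_single (σ i)]
  · simp [Equiv.Perm.mul_apply] <;> congr
  · intro b _ hb; simp [Ne.symm hb]
  · simp

lemma fromBlocks_pow (k l : ℕ) (σ : Equiv.Perm (Fin k)) (τ : Matrix (Fin l) (Fin l) ℚ)
    (m : ℕ) :
    (Matrix.fromBlocks (permMatrixQ σ) 0 0 τ) ^ m =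
      Matrix.fromBlocks (permMatrixQ (σ ^ m)) 0 0 (τ ^ m) := by
  induction m with
  | zero =>
    simp only [pow_zero]
    ext i j
    (cases i <;> cases j <;> simp [Matrix.one_apply, permMatrixQ]) <;> congr
  | succ n ih =>
    rw [pow_succ, ih, Matrix.fromBlocks_multiply]
    simp [permMatrixQ_mul, ← pow_succ', ← pow_succ]

/-- Let `f = diag(σ, τ)` with `σ` a permutation matrix of a permutation of `Fin k`
and `τ` a nilpotent `l×l` matrix.  A permutation `π` of the `k + l` indices stabilizes
`f` under conjugation iff `π = a ⊕ b` where `a` centralizes `σ` in `S_k` and `b`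
stabilizes `τ` in `S_l`. -/
theorem stabilizer_block_diagonal (k l : ℕ) (σ : Equiv.Perm (Fin k))
    (τ : Matrix (Fin l) (Fin l) ℚ) (hτ : IsNilpotent τ)
    (π : Equiv.Perm (Fin k ⊕ Fin l)) :
    (∀ i j, Matrix.fromBlocks (permMatrixQ σ) 0 0 τ (π i) (π j) =
        Matrix.fromBlocks (permMatrixQ σ) 0 0 τ i j) ↔
      ∃ (a : Equiv.Perm (Fin k)) (b : Equiv.Perm (Fin l)),
        a * σ = σ * a ∧ (∀ i j, τ (b i) (b j) = τ i j) ∧ π = Equiv.sumCongr a b := by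
  set M := Matrix.fromBlocks (permMatrixQ σ) 0 0 τ with hM
  constructor
  · intro h
    -- invariance passes to powers
    have hpow : ∀ m : ℕ, ∀ i j, (M ^ m) (π i) (π j) = (M ^ m) i j := by
      intro m
      induction m with
      | zero =>
        intro i j
        simp [Matrix.one_apply, EmbeddingLike.apply_eq_iff_eq]
      | succ n ih =>
        intro i j
        rw [pow_succ, Matrix.mul_apply, Matrix.mul_apply]
        rw [← Equiv.sum_comp π (fun x => (M ^ n) (π i) x * M x (π j))]
        exact Finset.sum_congr rfl fun x _ => by rw [ih, h]
    obtain ⟨n, hn⟩ := hτ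
    have hord : 0 < orderOf σ := orderOf_pos σ
    set L := (n + 1) * orderOf σ with hL
    have hσL : σ ^ L = 1 := by
      rw [hL, mul_comm, pow_mul, pow_orderOf_eq_one, one_pow]
    have hτL : τ ^ L = 0 := by
      have : n ≤ L := by
        calc n ≤ n + 1 := Nat.le_succ n
        _ = (n + 1) * 1 := (mul_one _).symm
        _ ≤ (n + 1) * orderOf σ := Nat.mul_le_mul_left _ hord
      obtain ⟨c, hc⟩ := Nat.exists_eq_add_of_le this
      rw [hc, pow_add, hn, zero_mul]
    have hML : M ^ L = Matrix.fromBlocks (permMatrixQ (1 : Equiv.Perm (Fin k))) 0 0 0 := by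
      rw [fromBlocks_pow, hσL, hτL]
    -- π maps inl to inl
    have hmaps : Set.MapsTo π (Set.range Sum.inl) (Set.range Sum.inl) := by
      rintro _ ⟨i, rfl⟩
      rcases hx : π (Sum.inl i) with j | j
      · exact ⟨j, rfl⟩
      · exfalso
        have := hpow L (Sum.inl i) (Sum.inl i)
        rw [hx, hML] at this
        simp [permMatrixQ, Matrix.fromBlocks] at this
    obtain ⟨⟨a, b⟩, hab⟩ := Equiv.Perm.mem_sumCongrHom_range_of_perm_mapsTo_inl hmaps
    rw [Equiv.Perm.sumCongrHom_apply] at hab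
    refine ⟨a, b, ?_, ?_, hab.symm⟩
    · apply Equiv.ext; intro i
      have h1 := h (Sum.inl i) (Sum.inl (σ i))
      rw [← hab] at h1
      rw [hM] at h1
      simp only [Equiv.sumCongr_apply, Sum.map_inl, Matrix.fromBlocks_apply₁₁,
        permMatrixQ] at h1
      rw [if_true] at h1
      simp only [Equiv.Perm.mul_apply]
      by_cases hc : σ (a i) = a (σ i)
      · exact hc.symm
      · rw [if_neg hc] at h1; exact absurd h1 (by norm_num)
    · intro i j
      have := h (Sum.inr i) (Sum.inr j)
      rw [← hab] at this
      simpa [hM] using this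
  · rintro ⟨a, b, hc, hb, rfl⟩
    intro i j
    cases i <;> cases j <;>
      simp only [Equiv.sumCongr_apply, Sum.map_inl, Sum.map_inr, hM,
        Matrix.fromBlocks_apply₁₁, Matrix.fromBlocks_apply₁₂,
        Matrix.fromBlocks_apply₂₁, Matrix.fromBlocks_apply₂₂,
        Matrix.zero_apply, hb, permMatrixQ]
    case inl.inl i j =>
      have : σ (a i) = a (σ i) := by
        have := congrFun (congrArg (⇑) hc) i
        simpa [Equiv.Perm.mul_apply] using this.symm
      by_cases hij : σ i = j
      · rw [if_pos hij, if_pos]; rw [← hij, this]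
      · rw [if_neg hij, if_neg]; intro hco; apply hij
        apply a.injective; rw [← this, hco]
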